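/- arXiv:1401.0398 — 3 statements merged into one kernel-verified Lean document; each statement's English description precedes it below -/
import Mathlib

section
/- Let X be a finite set and γ > 1. The Tsallis score S(x,Q) := (γ−1)∑_y q(y)^γ − γ q(x)^{γ−1} is strictly proper: its associated divergence D(P,Q) = ∑_y p(y)^γ + (γ−1)∑_y q(y)^γ − γ∑_y p(y) q(y)^{γ−1} satisfies D(P,Q) ≥ 0 for all probability mass functions P, Q on X, with equality if and only if P = Q. -/
open Real Set

/-- Pointwise Tsallis inequality: strict unless `a = b`. -/
lemma tsallis_pointwise_lt {γ : ℝ} (hγ : 1 < γ) {a b : ℝ} (ha : 0 ≤ a) (hb : 0 ≤ b)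
    (hab : a ≠ b) :
    γ * (a * b ^ (γ - 1)) < a ^ γ + (γ - 1) * b ^ γ := by
  rcases eq_or_lt_of_le hb with hb0 | hb0
  · -- b = 0
    rw [← hb0]
    rw [Real.zero_rpow (by linarith : γ - 1 ≠ 0), Real.zero_rpow (by linarith : γ ≠ 0)]
    have ha0 : 0 < a := lt_of_le_of_ne ha (fun h => hab (h ▸ hb0.symm ▸ rfl))
    have : 0 < a ^ γ := Real.rpow_pos_of_pos ha0 γ
    nlinarith
  · -- b > 0
    have hconv : StrictConvexOn ℝ (Ici (0:ℝ)) fun x : ℝ => x ^ γ := strictConvexOn_rpow hγ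
    have hderiv : HasDerivAt (fun x : ℝ => x ^ γ) (γ * b ^ (γ - 1)) b :=
      Real.hasDerivAt_rpow_const (Or.inl hb0.ne')
    have hbb : b * b ^ (γ - 1) = b ^ γ := by
      nth_rewrite 1 [← Real.rpow_one b]
      rw [← Real.rpow_add hb0]; ring_nf
    have key : γ * b ^ (γ - 1) * (a - b) < a ^ γ - b ^ γ := by
      rcases lt_or_gt_of_ne hab with h | h
      · -- a < b : slope f a b < f' b
        have := hconv.slope_lt_of_hasDerivAt (mem_Ici.2 ha) (mem_Ici.2 hb) h hderiv
        rw [slope_def_field] at this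
        have hba : 0 < b - a := by linarith
        rw [div_lt_iff₀ hba] at this
        nlinarith
      · -- b < a : f' b < slope f b a
        have := hconv.lt_slope_of_hasDerivAt (mem_Ici.2 hb) (mem_Ici.2 ha) h hderiv
        rw [slope_def_field] at this
        have hba : 0 < a - b := by linarith
        rw [lt_div_iff₀ hba] at this
        nlinarith
    nlinarith [key]

lemma tsallis_pointwise {γ : ℝ} (hγ : 1 < γ) {a b : ℝ} (ha : 0 ≤ a) (hb : 0 ≤ b) :
    0 ≤ a ^ γ + (γ - 1) * b ^ γ - γ * (a * b ^ (γ - 1)) ∧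
      (a ^ γ + (γ - 1) * b ^ γ - γ * (a * b ^ (γ - 1)) = 0 ↔ a = b) := by
  rcases eq_or_ne a b with rfl | hab
  · have hbb : a * a ^ (γ - 1) = a ^ γ := by
      rcases eq_or_lt_of_le ha with h0 | h0
      · rw [← h0, Real.zero_rpow (by linarith : γ - 1 ≠ 0),
          Real.zero_rpow (by linarith : γ ≠ 0), mul_zero]
      · nth_rewrite 1 [← Real.rpow_one a]
        rw [← Real.rpow_add h0]; ring_nf
    constructor
    · nlinarith
    · constructor <;> intro _ <;> nlinarith
  · have h := tsallis_pointwise_lt hγ ha hb hab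
    exact ⟨by linarith, ⟨fun h0 => absurd h0 (by nlinarith), fun h0 => absurd h0 hab⟩⟩

/-- The Tsallis score (γ > 1) is strictly proper: its divergence
`D(P,Q) = ∑ p^γ + (γ−1)∑ q^γ − γ∑ p q^{γ−1}` is nonnegative, vanishing iff `P = Q`. -/
theorem tsallis_score_strictly_proper
    {X : Type*} [Fintype X]
    (γ : ℝ) (hγ : 1 < γ)
    (p q : X → ℝ)
    (hp_nonneg : ∀ x, 0 ≤ p x) (hq_nonneg : ∀ x, 0 ≤ q x)
    (hp_sum : ∑ x, p x = 1) (hq_sum : ∑ x, q x = 1) :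
    0 ≤ (∑ y, p y ^ γ) + (γ - 1) * (∑ y, q y ^ γ) - γ * ∑ y, p y * q y ^ (γ - 1) ∧
    ((∑ y, p y ^ γ) + (γ - 1) * (∑ y, q y ^ γ) - γ * (∑ y, p y * q y ^ (γ - 1)) = 0 ↔ p = q) := by
  have hsum : (∑ y, p y ^ γ) + (γ - 1) * (∑ y, q y ^ γ) - γ * (∑ y, p y * q y ^ (γ - 1))
      = ∑ y, (p y ^ γ + (γ - 1) * q y ^ γ - γ * (p y * q y ^ (γ - 1))) := by
    rw [Finset.sum_sub_distrib, Finset.sum_add_distrib, Finset.mul_sum, Finset.mul_sum]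
  have hterm := fun y => tsallis_pointwise hγ (hp_nonneg y) (hq_nonneg y)
  rw [hsum]
  constructor
  · exact Finset.sum_nonneg fun y _ => (hterm y).1
  · rw [Finset.sum_eq_zero_iff_of_nonneg fun y _ => (hterm y).1]
    constructor
    · intro h; funext y
      exact ((hterm y).2).1 (h y (Finset.mem_univ y))
    · intro h y _
      exact ((hterm y).2).2 (congrFun h y)
end

section
/- Let P be a probability density on ℝᵏ that is smooth, strictly positive, with ∇log p and ∇log q square-integrable under p, and such that boundary terms vanish (p(y)∇log q(y) → 0 as |y| → ∞ in the sense that the divergence theorem applies with zero boundary contribution). Then the expected Hyvärinen score S(P,Q) := E_{Y∼P}[Δ log q(Y) + ½|∇log q(Y)|²] satisfies S(P,Q) − S(P,P) = ½ E_{Y∼P}|∇log p(Y) − ∇log q(Y)|² ≥ 0, with equality iff ∇log p = ∇log q p-almost everywhere. Hence the Hyvärinen score is proper. -/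
open MeasureTheory RealInnerProductSpace

/-- The Laplacian `Δ f x = ∑ i ∂²f/∂xᵢ²` of `f : ℝᵏ → ℝ`. -/
noncomputable def lap {k : ℕ} (f : EuclideanSpace ℝ (Fin k) → ℝ)
    (x : EuclideanSpace ℝ (Fin k)) : ℝ :=
  ∑ i, fderiv ℝ (fun z => fderiv ℝ f z (EuclideanSpace.single i (1:ℝ))) x
    (EuclideanSpace.single i (1:ℝ))

/-- The Hyvärinen score `S(x,Q) = Δ log q(x) + ½|∇ log q(x)|²`. -/
noncomputable def hyvScore {k : ℕ} (q : EuclideanSpace ℝ (Fin k) → ℝ)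
    (x : EuclideanSpace ℝ (Fin k)) : ℝ :=
  lap (fun z => Real.log (q z)) x + (1 / 2) * ‖gradient (fun z => Real.log (q z)) x‖ ^ 2

/-- Continuity of the gradient of a `C²` function. -/
lemma continuous_gradient_of_contDiff {k : ℕ} (f : EuclideanSpace ℝ (Fin k) → ℝ)
    (hf : ContDiff ℝ 2 f) : Continuous (fun x => gradient f x) := by
  unfold gradient
  exact (InnerProductSpace.toDual ℝ _).symm.continuous.comp
    (hf.continuous_fderiv (by norm_num))

/-- Under regularity (smoothness, positivity, square-integrable score
gradients, and validity of integration by parts with vanishing boundary terms), the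
expected Hyvärinen score satisfies
`S(P,Q) − S(P,P) = ½ E_P ‖∇log p − ∇log q‖² ≥ 0`, with equality iff
`∇log p = ∇log q` `P`-almost everywhere; hence the Hyvärinen score is proper. -/
theorem hyvarinen_score_proper
    {k : ℕ} (p q : EuclideanSpace ℝ (Fin k) → ℝ)
    (hp : ContDiff ℝ 2 p) (hq : ContDiff ℝ 2 q)
    (hp_pos : ∀ y, 0 < p y) (hq_pos : ∀ y, 0 < q y)
    (hp_prob : ∫ y, p y = 1)
    -- square integrability of the log-gradients under p
    (hL2p : Integrable (fun y => p y * ‖gradient (fun z => Real.log (p z)) y‖ ^ 2))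
    (hL2q : Integrable (fun y => p y * ‖gradient (fun z => Real.log (q z)) y‖ ^ 2))
    (hS_int_q : Integrable (fun y => p y * hyvScore q y))
    (hS_int_p : Integrable (fun y => p y * hyvScore p y))
    -- integration by parts with vanishing boundary terms:
    (hibp_q : ∫ y, p y * lap (fun z => Real.log (q z)) y
        = -∫ y, p y * (inner ℝ (gradient (fun z => Real.log (p z)) y)
            (gradient (fun z => Real.log (q z)) y) : ℝ))
    (hibp_p : ∫ y, p y * lap (fun z => Real.log (p z)) y
        = -∫ y, p y * (inner ℝ (gradient (fun z => Real.log (p z)) y)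
            (gradient (fun z => Real.log (p z)) y) : ℝ)) :
    ((∫ y, p y * hyvScore q y) - ∫ y, p y * hyvScore p y
        = (1 / 2) * ∫ y, p y * ‖gradient (fun z => Real.log (p z)) y
            - gradient (fun z => Real.log (q z)) y‖ ^ 2) ∧
    (0 ≤ (∫ y, p y * hyvScore q y) - ∫ y, p y * hyvScore p y) ∧
    ((∫ y, p y * hyvScore q y) - (∫ y, p y * hyvScore p y) = 0 ↔
      ∀ᵐ y ∂(volume.withDensity fun y => ENNReal.ofReal (p y)),
        gradient (fun z => Real.log (p z)) y = gradient (fun z => Real.log (q z)) y) := by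
  set gp : EuclideanSpace ℝ (Fin k) → EuclideanSpace ℝ (Fin k) :=
    fun y => gradient (fun z => Real.log (p z)) y with hgp
  set gq : EuclideanSpace ℝ (Fin k) → EuclideanSpace ℝ (Fin k) :=
    fun y => gradient (fun z => Real.log (q z)) y with hgq
  have hlogp : ContDiff ℝ 2 fun z => Real.log (p z) :=
    hp.log fun x => (hp_pos x).ne'
  have hlogq : ContDiff ℝ 2 fun z => Real.log (q z) :=
    hq.log fun x => (hq_pos x).ne'
  have hgp' : ∀ y, gradient (fun z => Real.log (p z)) y = gp y := fun _ => rfl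
  have hgq' : ∀ y, gradient (fun z => Real.log (q z)) y = gq y := fun _ => rfl
  have hcgp : Continuous gp := continuous_gradient_of_contDiff _ hlogp
  have hcgq : Continuous gq := continuous_gradient_of_contDiff _ hlogq
  -- integrability of p * ⟨gp, gq⟩
  have hinner_int : Integrable (fun y => p y * (inner ℝ (gp y) (gq y) : ℝ)) := by
    refine Integrable.mono' ((hL2p.add hL2q).const_mul (1 / 2)) ?_ ?_
    · exact (hp.continuous.mul (hcgp.inner hcgq)).aestronglyMeasurable
    · refine Filter.Eventually.of_forall fun y => ?_
      have h1 : |(inner ℝ (gp y) (gq y) : ℝ)| ≤ ‖gp y‖ * ‖gq y‖ :=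
        abs_real_inner_le_norm _ _
      have h2 : ‖gp y‖ * ‖gq y‖ ≤ (1 / 2) * (‖gp y‖ ^ 2 + ‖gq y‖ ^ 2) := by
        nlinarith [sq_nonneg (‖gp y‖ - ‖gq y‖)]
      have hpy := (hp_pos y).le
      calc ‖p y * (inner ℝ (gp y) (gq y) : ℝ)‖
          = p y * |(inner ℝ (gp y) (gq y) : ℝ)| := by
            rw [Real.norm_eq_abs, abs_mul, abs_of_nonneg hpy]
        _ ≤ p y * ((1 / 2) * (‖gp y‖ ^ 2 + ‖gq y‖ ^ 2)) := by
            exact mul_le_mul_of_nonneg_left (h1.trans h2) hpy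
        _ = (1 / 2) * (p y * ‖gp y‖ ^ 2 + p y * ‖gq y‖ ^ 2) := by ring
  -- integrability of p * lap log q and p * lap log p
  have hlapq_int : Integrable (fun y => p y * lap (fun z => Real.log (q z)) y) := by
    have := hS_int_q.sub (hL2q.const_mul (1 / 2))
    refine this.congr (Filter.Eventually.of_forall fun y => ?_)
    simp only [Pi.sub_apply, Pi.add_apply, hyvScore, hgp', hgq']; ring
  have hlapp_int : Integrable (fun y => p y * lap (fun z => Real.log (p z)) y) := by
    have := hS_int_p.sub (hL2p.const_mul (1 / 2))
    refine this.congr (Filter.Eventually.of_forall fun y => ?_)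
    simp only [Pi.sub_apply, Pi.add_apply, hyvScore, hgp', hgq']; ring
  -- split the score integrals
  have hsplit_q : (∫ y, p y * hyvScore q y)
      = (∫ y, p y * lap (fun z => Real.log (q z)) y)
        + (1 / 2) * ∫ y, p y * ‖gq y‖ ^ 2 := by
    rw [← integral_const_mul, ← integral_add hlapq_int (hL2q.const_mul (1 / 2))]
    congr 1; funext y; simp only [Pi.sub_apply, Pi.add_apply, hyvScore, hgp', hgq']; ring
  have hsplit_p : (∫ y, p y * hyvScore p y)
      = (∫ y, p y * lap (fun z => Real.log (p z)) y)
        + (1 / 2) * ∫ y, p y * ‖gp y‖ ^ 2 := by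
    rw [← integral_const_mul, ← integral_add hlapp_int (hL2p.const_mul (1 / 2))]
    congr 1; funext y; simp only [Pi.sub_apply, Pi.add_apply, hyvScore, hgp', hgq']; ring
  -- rewrite the self-inner integral
  have hself : (∫ y, p y * (inner ℝ (gp y) (gp y) : ℝ)) = ∫ y, p y * ‖gp y‖ ^ 2 := by
    congr 1; funext y; rw [real_inner_self_eq_norm_sq]
  -- integrability and value of the squared-difference integral
  have hdiff_int : Integrable (fun y => p y * ‖gp y - gq y‖ ^ 2) := by
    have := (hL2p.sub (hinner_int.const_mul 2)).add hL2q
    refine this.congr (Filter.Eventually.of_forall fun y => ?_)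
    simp only [Pi.sub_apply, Pi.add_apply, hgp', hgq']
    rw [norm_sub_sq_real]; ring
  have hI1 : Integrable (fun y => p y * ‖gp y‖ ^ 2
      - 2 * (p y * (inner ℝ (gp y) (gq y) : ℝ))) := by
    have := hL2p.sub (hinner_int.const_mul 2)
    refine this.congr (Filter.Eventually.of_forall fun y => ?_)
    simp only [Pi.sub_apply, hgp', hgq']
  have hkey : (∫ y, p y * ‖gp y - gq y‖ ^ 2)
      = (∫ y, p y * ‖gp y‖ ^ 2) - 2 * (∫ y, p y * (inner ℝ (gp y) (gq y) : ℝ))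
        + ∫ y, p y * ‖gq y‖ ^ 2 := by
    have e1 : (fun y => p y * ‖gp y - gq y‖ ^ 2)
        = fun y => (p y * ‖gp y‖ ^ 2 - 2 * (p y * (inner ℝ (gp y) (gq y) : ℝ)))
          + p y * ‖gq y‖ ^ 2 := by
      funext y; rw [norm_sub_sq_real]; ring
    have hL2q' : Integrable (fun y => p y * ‖gq y‖ ^ 2) := by
      refine hL2q.congr (Filter.Eventually.of_forall fun y => ?_)
      simp only [hgq']
    rw [e1, integral_add hI1 hL2q', integral_sub hL2p (hinner_int.const_mul 2),
      integral_const_mul]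
  -- main identity
  have hmain : (∫ y, p y * hyvScore q y) - (∫ y, p y * hyvScore p y)
      = (1 / 2) * ∫ y, p y * ‖gp y - gq y‖ ^ 2 := by
    rw [hsplit_q, hsplit_p, hibp_q, hibp_p, hself, hkey]; ring
  have hnonneg : 0 ≤ ∫ y, p y * ‖gp y - gq y‖ ^ 2 :=
    integral_nonneg fun y => mul_nonneg (hp_pos y).le (sq_nonneg _)
  refine ⟨hmain, by rw [hmain]; positivity, ?_⟩
  rw [hmain]
  have hpm : Measurable fun y => ENNReal.ofReal (p y) :=
    ENNReal.measurable_ofReal.comp hp.continuous.measurable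
  rw [ae_withDensity_iff hpm]
  constructor
  · intro h
    have h0 : (∫ y, p y * ‖gp y - gq y‖ ^ 2) = 0 := by linarith
    rw [integral_eq_zero_iff_of_nonneg
      (fun y => mul_nonneg (hp_pos y).le (sq_nonneg _)) hdiff_int] at h0
    filter_upwards [h0] with y hy _
    have hy' : p y * ‖gp y - gq y‖ ^ 2 = 0 := hy
    have : ‖gp y - gq y‖ ^ 2 = 0 := by
      rcases mul_eq_zero.mp hy' with h | h
      · exact absurd h (hp_pos y).ne'
      · exact h
    have : gp y - gq y = 0 := by
      simpa using (pow_eq_zero_iff (n := 2) (by norm_num)).mp this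
    exact sub_eq_zero.mp this
  · intro h
    have h0 : (∫ y, p y * ‖gp y - gq y‖ ^ 2) = 0 := by
      rw [integral_eq_zero_iff_of_nonneg
        (fun y => mul_nonneg (hp_pos y).le (sq_nonneg _)) hdiff_int]
      filter_upwards [h] with y hy
      have : gp y = gq y := hy (ENNReal.ofReal_pos.mpr (hp_pos y)).ne'
      simp [this]
    rw [h0]; ring
end

section
/- Consider the location model on ℝ with density p_θ(x) = f(x−θ), f positive and differentiable, and the Bregman score with convex twice-differentiable ψ. The derivative of the score with respect to θ satisfies s(x,θ) := ∂S(x,θ)/∂θ = ψ''(f(u)) f'(u) with u = x−θ, where S(x,θ) = −ψ'(f(x−θ)) − ∫[ψ(f(y−θ)) − f(y−θ)ψ'(f(y−θ))]dy. Consequently, if f' is bounded on ℝ and ψ'' is bounded on (0,M] for every finite M, then s(x,θ) is bounded in x for each fixed θ (B-robustness). -/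
open MeasureTheory

/-- The Bregman score of the location model `p_θ(x) = f(x−θ)`:
`S(x,θ) = −ψ'(f(x−θ)) − ∫ [ψ(f(y−θ)) − f(y−θ) ψ'(f(y−θ))] dy`. -/
noncomputable def locBregScore (ψ' : ℝ → ℝ) (ψ : ℝ → ℝ) (f : ℝ → ℝ) (x θ : ℝ) : ℝ :=
  -ψ' (f (x - θ)) - ∫ y, (ψ (f (y - θ)) - f (y - θ) * ψ' (f (y - θ)))

/-- A positive differentiable integrable density with bounded derivative is bounded. -/
lemma density_bounded_of_deriv_bounded
    (f f' : ℝ → ℝ) (hf_pos : ∀ u, 0 < f u)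
    (hf_deriv : ∀ u, HasDerivAt f (f' u) u)
    (hf_int : Integrable f) (hf_prob : ∫ u, f u = 1)
    (C : ℝ) (hC : 0 < C) (hC' : ∀ u, |f' u| ≤ C) :
    ∀ u, f u ≤ Real.sqrt (4 * C) := by
  -- f is C-Lipschitz
  have hlip : ∀ a b : ℝ, a < b → |f b - f a| ≤ C * (b - a) := by
    intro a b hab
    obtain ⟨c, _, hc⟩ := exists_hasDerivAt_eq_slope f f' hab
      (fun x _ => (hf_deriv x).continuousAt.continuousWithinAt) (fun x _ => hf_deriv x)
    have : f b - f a = f' c * (b - a) := by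
      rw [eq_div_iff (by linarith : b - a ≠ 0)] at hc; linarith
    rw [this, abs_mul, abs_of_pos (by linarith : (0:ℝ) < b - a)]
    exact mul_le_mul_of_nonneg_right (hC' c) (by linarith)
  intro u
  set r : ℝ := f u / (2 * C) with hr
  have hrpos : 0 < r := div_pos (hf_pos u) (by linarith)
  -- on [u - r, u], f ≥ f u / 2
  have hlow : ∀ y ∈ Set.Icc (u - r) u, f u / 2 ≤ f y := by
    intro y hy
    rcases eq_or_lt_of_le hy.2 with h | h
    · rw [h]; linarith [hf_pos u]
    · have := hlip y u h
      have h1 : u - y ≤ r := by linarith [hy.1]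
      have h2 : |f u - f y| ≤ C * r := le_trans this
        (mul_le_mul_of_nonneg_left h1 (le_of_lt hC))
      have h3 : C * r = f u / 2 := by rw [hr]; field_simp
      rw [h3] at h2
      have := abs_le.1 h2
      linarith [this.1]
  -- compare integrals
  have hle1 : ∫ y in Set.Icc (u - r) u, f y ≤ ∫ y, f y := by
    apply setIntegral_le_integral hf_int
    filter_upwards with y using le_of_lt (hf_pos y)
  have hle2 : (r * (f u / 2)) ≤ ∫ y in Set.Icc (u - r) u, f y := by
    have : ∫ y in Set.Icc (u - r) u, (f u / 2) ≤ ∫ y in Set.Icc (u - r) u, f y := by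
      apply setIntegral_mono_on (integrableOn_const (hs := by simp))
        (hf_int.integrableOn) measurableSet_Icc
      exact hlow
    calc r * (f u / 2) = ∫ y in Set.Icc (u - r) u, (f u / 2) := by
          rw [setIntegral_const]
          rw [measureReal_def, Real.volume_Icc]
          rw [ENNReal.toReal_ofReal (by linarith : (0:ℝ) ≤ u - (u - r))]
          simp only [smul_eq_mul]; ring_nf
      _ ≤ _ := this
  rw [hf_prob] at hle1
  have hsq : f u ^ 2 ≤ 4 * C := by
    have : r * (f u / 2) = f u ^ 2 / (4 * C) := by rw [hr]; ring
    rw [this] at hle2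
    have h4 : f u ^ 2 / (4 * C) ≤ 1 := le_trans hle2 hle1
    calc f u ^ 2 = (f u ^ 2 / (4 * C)) * (4 * C) := by field_simp
      _ ≤ 1 * (4 * C) := mul_le_mul_of_nonneg_right h4 (by linarith)
      _ = 4 * C := by ring
  calc f u = Real.sqrt (f u ^ 2) := by
        rw [Real.sqrt_sq (le_of_lt (hf_pos u))]
    _ ≤ Real.sqrt (4 * C) := Real.sqrt_le_sqrt hsq

/-- For the location model with positive differentiable density `f` and the
Bregman score with convex twice-differentiable `ψ`, the score function is
`s(x,θ) = ψ''(f(x−θ)) f'(x−θ)`; consequently, if `f'` is bounded on `ℝ` and `ψ''` is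
bounded on `(0,M]` for every finite `M`, then `s(·,θ)` is bounded for each `θ`
(B-robustness). -/
theorem location_bregman_score_and_robustness
    (f f' : ℝ → ℝ) (hf_pos : ∀ u, 0 < f u)
    (hf_deriv : ∀ u, HasDerivAt f (f' u) u)
    (hf_int : Integrable f) (hf_prob : ∫ u, f u = 1)
    (ψ ψ' ψ'' : ℝ → ℝ)
    (hψ_conv : ConvexOn ℝ (Set.Ioi (0:ℝ)) ψ)
    (hψ_deriv : ∀ t : ℝ, 0 < t → HasDerivAt ψ (ψ' t) t)
    (hψ'_deriv : ∀ t : ℝ, 0 < t → HasDerivAt ψ' (ψ'' t) t)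
    (hint : ∀ θ : ℝ, Integrable fun y => ψ (f (y - θ)) - f (y - θ) * ψ' (f (y - θ))) :
    (∀ x θ : ℝ, HasDerivAt (fun t => locBregScore ψ' ψ f x t)
        (ψ'' (f (x - θ)) * f' (x - θ)) θ) ∧
    ((∃ C, ∀ u, |f' u| ≤ C) →
      (∀ M : ℝ, 0 < M → ∃ K, ∀ t ∈ Set.Ioc (0:ℝ) M, |ψ'' t| ≤ K) →
      ∀ θ : ℝ, ∃ B, ∀ x : ℝ, |ψ'' (f (x - θ)) * f' (x - θ)| ≤ B) := by
  constructor
  · intro x θ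
    -- the integral term is constant in θ
    have hconst : (fun t => locBregScore ψ' ψ f x t) =
        fun t => -ψ' (f (x - t)) - ∫ y, (ψ (f y) - f y * ψ' (f y)) := by
      funext t
      unfold locBregScore
      congr 1
      exact integral_sub_right_eq_self (fun y => ψ (f y) - f y * ψ' (f y)) t
    rw [hconst]
    have hinner : HasDerivAt (fun t : ℝ => x - t) (-1 : ℝ) θ :=
      ((hasDerivAt_id θ).const_sub x)
    have hfc : HasDerivAt (fun t : ℝ => f (x - t)) (f' (x - θ) * (-1)) θ :=
      (hf_deriv (x - θ)).comp θ hinner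
    have hψc : HasDerivAt (fun t : ℝ => ψ' (f (x - t)))
        (ψ'' (f (x - θ)) * (f' (x - θ) * (-1))) θ :=
      (hψ'_deriv (f (x - θ)) (hf_pos _)).comp θ hfc
    have := (hψc.neg).sub_const (∫ y, (ψ (f y) - f y * ψ' (f y)))
    convert this using 1
    · rfl
    · rfl
    · rfl
    · ring
  · rintro ⟨C, hC⟩ hK θ
    have hC0 : (0:ℝ) < max C 1 := lt_of_lt_of_le one_pos (le_max_right _ _)
    have hC' : ∀ u, |f' u| ≤ max C 1 := fun u => le_trans (hC u) (le_max_left _ _)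
    have hM : ∀ u, f u ≤ Real.sqrt (4 * max C 1) :=
      density_bounded_of_deriv_bounded f f' hf_pos hf_deriv hf_int hf_prob _ hC0 hC'
    have hMpos : 0 < Real.sqrt (4 * max C 1) :=
      Real.sqrt_pos.2 (by linarith)
    obtain ⟨K, hKb⟩ := hK _ hMpos
    refine ⟨|K| * max C 1, fun x => ?_⟩
    rw [abs_mul]
    have h1 : |ψ'' (f (x - θ))| ≤ |K| := by
      refine le_trans (hKb _ ⟨hf_pos _, hM _⟩) (le_abs_self K)
    exact mul_le_mul h1 (hC' _) (abs_nonneg _) (abs_nonneg _)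
end
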